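/- (Classical Newton–Wigner theorem, spin-zero case.) Let X : ℝ³ × ℝ³ → ℝ³ be a C¹ function whose components satisfy (i) {X^a, X^b} = 0 for all a,b; (ii) {X^a, P_b} = δ_ab for all a,b; (iii) {J_ab, X^c} = δ_ac X^b − δ_bc X^a for all a,b,c; (iv) X(x,−p) = X(x,p) for all (x,p) (time-reversal invariance). Then X(x,p) = x for all (x,p) ∈ ℝ³ × ℝ³. Conversely, the projection (x,p) ↦ x satisfies (i)–(iv). -/

import Mathlib

noncomputable section

open Finset

abbrev R3 := Fin 3 → ℝ

/-- The spin-zero phase space Γ₀ = ℝ³ × ℝ³ with points (x, p). -/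
abbrev Phase0 := R3 × R3

/-- Euclidean dot product on ℝ³. -/
def dot3 (v w : R3) : ℝ := ∑ a, v a * w a

/-- Gradient of f with respect to x. -/
def dX0 (f : Phase0 → ℝ) (γ : Phase0) : R3 := fun a => fderiv ℝ f γ (Pi.single a 1, 0)

/-- Gradient of f with respect to p. -/
def dP0 (f : Phase0 → ℝ) (γ : Phase0) : R3 := fun a => fderiv ℝ f γ (0, Pi.single a 1)

/-- Poisson bracket {f,g} = ∇ₓf·∇ₚg − ∇ₚf·∇ₓg on Γ₀. -/
def pb0 (f g : Phase0 → ℝ) (γ : Phase0) : ℝ :=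
  dot3 (dX0 f γ) (dP0 g γ) - dot3 (dP0 f γ) (dX0 g γ)

/-- Kronecker delta. -/
def kdelta (a b : Fin 3) : ℝ := if a = b then 1 else 0

/-- Generator of spatial translations: P_a(x,p) = p_a. -/
def Pgen0 (a : Fin 3) : Phase0 → ℝ := fun γ => γ.2 a

/-- Generator of rotations: J_ab(x,p) = x_a p_b − x_b p_a. -/
def Jgen0 (a b : Fin 3) : Phase0 → ℝ := fun γ => γ.1 a * γ.2 b - γ.1 b * γ.2 a

-- CLMs
def xCLM (a : Fin 3) : Phase0 →L[ℝ] ℝ :=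
  (ContinuousLinearMap.proj a).comp (ContinuousLinearMap.fst ℝ R3 R3)
def pCLM (a : Fin 3) : Phase0 →L[ℝ] ℝ :=
  (ContinuousLinearMap.proj a).comp (ContinuousLinearMap.snd ℝ R3 R3)

lemma xCLM_apply (a : Fin 3) (v : Phase0) : xCLM a v = v.1 a := rfl
lemma pCLM_apply (a : Fin 3) (v : Phase0) : pCLM a v = v.2 a := rfl

lemma hasF_x (a : Fin 3) (γ : Phase0) :
    HasFDerivAt (fun γ : Phase0 => γ.1 a) (xCLM a) γ := (xCLM a).hasFDerivAt

lemma hasF_p (a : Fin 3) (γ : Phase0) :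
    HasFDerivAt (Pgen0 a) (pCLM a) γ := (pCLM a).hasFDerivAt

lemma kdelta_comm (a b : Fin 3) : kdelta a b = kdelta b a := by
  simp [kdelta, eq_comm]

lemma single_apply (a b : Fin 3) : (Pi.single a 1 : R3) b = kdelta b a := by
  simp [Pi.single_apply, kdelta]

lemma dot3_kdelta (v : R3) (b : Fin 3) : dot3 v (fun k => kdelta b k) = v b := by
  simp [dot3, kdelta, mul_ite]

lemma dX0_x (a : Fin 3) (γ : Phase0) : dX0 (fun γ => γ.1 a) γ = fun k => kdelta a k := by
  funext k
  simp [dX0, (hasF_x a γ).fderiv, xCLM_apply, single_apply]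

lemma dP0_x (a : Fin 3) (γ : Phase0) : dP0 (fun γ => γ.1 a) γ = 0 := by
  funext k
  simp [dP0, (hasF_x a γ).fderiv, xCLM_apply]

lemma dX0_p (a : Fin 3) (γ : Phase0) : dX0 (Pgen0 a) γ = 0 := by
  funext k
  simp [dX0, Pgen0, (hasF_p a γ).fderiv, pCLM_apply]

lemma dP0_p (a : Fin 3) (γ : Phase0) : dP0 (Pgen0 a) γ = fun k => kdelta a k := by
  funext k
  simp [dP0, Pgen0, (hasF_p a γ).fderiv, pCLM_apply, single_apply]

-- Jgen0 derivative
lemma hasF_J (a b : Fin 3) (γ : Phase0) :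
    HasFDerivAt (Jgen0 a b)
      (γ.1 a • pCLM b + γ.2 b • xCLM a - (γ.1 b • pCLM a + γ.2 a • xCLM b)) γ := by
  have h1 := ((hasF_x a γ).mul (hasF_p b γ))
  have h2 := ((hasF_x b γ).mul (hasF_p a γ))
  exact h1.sub h2

lemma dX0_J (a b : Fin 3) (γ : Phase0) :
    dX0 (Jgen0 a b) γ = fun k => kdelta a k * γ.2 b - kdelta b k * γ.2 a := by
  funext k
  simp [dX0, (hasF_J a b γ).fderiv, xCLM_apply, pCLM_apply, single_apply]
  ring

lemma dP0_J (a b : Fin 3) (γ : Phase0) :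
    dP0 (Jgen0 a b) γ = fun k => γ.1 a * kdelta b k - γ.1 b * kdelta a k := by
  funext k
  simp [dP0, (hasF_J a b γ).fderiv, xCLM_apply, pCLM_apply, single_apply]

lemma dot3_zero_right (v : R3) : dot3 v 0 = 0 := by simp [dot3]
lemma dot3_zero_left (v : R3) : dot3 0 v = 0 := by simp [dot3]

-- converse computations
lemma conv1 (a b : Fin 3) (γ : Phase0) :
    pb0 (fun γ : Phase0 => γ.1 a) (fun γ => γ.1 b) γ = 0 := by
  simp [pb0, dX0_x, dP0_x, dot3_zero_right, dot3_zero_left]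

lemma conv2 (a b : Fin 3) (γ : Phase0) :
    pb0 (fun γ : Phase0 => γ.1 a) (Pgen0 b) γ = kdelta a b := by
  simp [pb0, dX0_x, dP0_x, dP0_p, dX0_p, dot3_zero_right, dot3_zero_left, dot3_kdelta]

lemma conv3 (a b c : Fin 3) (γ : Phase0) :
    pb0 (Jgen0 a b) (fun γ : Phase0 => γ.1 c) γ
      = kdelta a c * γ.1 b - kdelta b c * γ.1 a := by
  simp only [pb0, dX0_x, dP0_x, dX0_J, dP0_J, dot3_zero_right, dot3_kdelta]
  rw [kdelta_comm b c, kdelta_comm a c]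
  ring

lemma R3_sum (v : R3) : ∑ k, v k • (Pi.single k 1 : R3) = v := by
  funext j
  simp [Finset.sum_apply, Pi.single_apply, eq_comm]

lemma clm_sum (L : R3 →L[ℝ] ℝ) (w : R3) : L w = ∑ k, w k * L (Pi.single k 1) := by
  conv_lhs => rw [← R3_sum w]
  rw [map_sum]
  simp [smul_eq_mul]

lemma clm_sum2 (L : Phase0 →L[ℝ] ℝ) (v : R3) : L (v, 0) = ∑ k, v k * L (Pi.single k 1, 0) := by
  have h : ∑ k, v k • (((Pi.single k 1 : R3), (0:R3)) : Phase0) = ((v, 0) : Phase0) := by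
    apply Prod.ext
    · rw [Prod.fst_sum]
      simpa using R3_sum v
    · rw [Prod.snd_sum]
      simp
  rw [← h, map_sum]
  refine Finset.sum_congr rfl fun k _ => ?_
  rw [map_smul, smul_eq_mul]

lemma Xc_diff (X : Phase0 → R3) (hX : ContDiff ℝ 1 X) (c : Fin 3) :
    Differentiable ℝ (fun γ => X γ c) :=
  (contDiff_pi.1 hX c).differentiable one_ne_zero

lemma hDXlem (X : Phase0 → R3)
    (h2 : ∀ a b : Fin 3, ∀ γ, pb0 (fun γ => X γ a) (Pgen0 b) γ = kdelta a b) :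
    ∀ a b : Fin 3, ∀ γ, dX0 (fun γ => X γ a) γ b = kdelta a b := by
  intro a b γ
  have h := h2 a b γ
  rw [pb0, dX0_p, dP0_p, dot3_kdelta, dot3_zero_right, sub_zero] at h
  exact h

lemma split (X : Phase0 → R3) (hX : ContDiff ℝ 1 X)
    (h2 : ∀ a b : Fin 3, ∀ γ, pb0 (fun γ => X γ a) (Pgen0 b) γ = kdelta a b) :
    ∀ x p a, X (x, p) a = x a + X (0, p) a := by
  intro x p a
  have hd := Xc_diff X hX a
  have key : ∀ y : R3, HasFDerivAt (fun y : R3 => X (y, p) a - y a) (0 : R3 →L[ℝ] ℝ) y := by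
    intro y
    have h1 : HasFDerivAt (fun y : R3 => X (y, p) a)
        ((fderiv ℝ (fun γ => X γ a) (y, p)).comp
          ((ContinuousLinearMap.id ℝ R3).prod 0)) y :=
      (hd (y, p)).hasFDerivAt.comp (g := fun γ : Phase0 => X γ a) y (HasFDerivAt.prodMk (hasFDerivAt_id (𝕜 := ℝ) y) (hasFDerivAt_const p y))
    have h3 := h1.sub (ContinuousLinearMap.proj a : R3 →L[ℝ] ℝ).hasFDerivAt
    refine h3.congr_fderiv ?_
    ext v
    have hv : ((ContinuousLinearMap.id ℝ R3).prod 0) v = ((v, 0) : Phase0) := rfl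
    simp only [ContinuousLinearMap.zero_apply, ContinuousLinearMap.sub_apply,
      ContinuousLinearMap.comp_apply, hv, ContinuousLinearMap.proj_apply]
    rw [clm_sum2]
    have hk : ∀ k, (fderiv ℝ (fun γ => X γ a) (y, p)) (Pi.single k 1, 0) = kdelta a k :=
      fun k => hDXlem X h2 a k (y, p)
    simp only [hk]
    have hs : ∑ k, v k * kdelta a k = v a := by
      simp [kdelta, eq_comm, mul_ite]
    rw [hs]; ring
  have hc := is_const_of_fderiv_eq_zero (fun y => (key y).differentiableAt)
    (fun y => (key y).fderiv) x 0
  have h0 : ((0 : R3)) a = 0 := rfl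
  simp only [h0, sub_zero] at hc
  linarith [hc]

/-- Cross product on R3. -/
def cross (n v : R3) : R3 :=
  fun k => n (k + 1) * v (k + 2) - n (k + 2) * v (k + 1)

lemma cross0 (n v : R3) : cross n v 0 = n 1 * v 2 - n 2 * v 1 := rfl
lemma cross1 (n v : R3) : cross n v 1 = n 2 * v 0 - n 0 * v 2 := rfl
lemma cross2 (n v : R3) : cross n v 2 = n 0 * v 1 - n 1 * v 0 := rfl

lemma cross_add_smul (n u v : R3) (a b : ℝ) (k : Fin 3) :
    cross n (a • u + b • v) k = a * cross n u k + b * cross n v k := by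
  simp only [cross, Pi.add_apply, Pi.smul_apply, smul_eq_mul]; ring

lemma dot3_cross_left (u v : R3) : dot3 (cross u v) v = 0 := by
  simp only [dot3, Fin.sum_univ_three, cross0, cross1, cross2]; ring

lemma cross_cross3 (n v : R3) (k : Fin 3) :
    cross n (cross n v) k = dot3 n v * n k - dot3 n n * v k := by
  fin_cases k
  · show cross n (cross n v) 0 = dot3 n v * n 0 - dot3 n n * v 0
    simp only [cross0, cross1, cross2, dot3, Fin.sum_univ_three]; ring
  · show cross n (cross n v) 1 = dot3 n v * n 1 - dot3 n n * v 1
    simp only [cross0, cross1, cross2, dot3, Fin.sum_univ_three]; ring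
  · show cross n (cross n v) 2 = dot3 n v * n 2 - dot3 n n * v 2
    simp only [cross0, cross1, cross2, dot3, Fin.sum_univ_three]; ring

lemma dot3_cross_self (n v : R3) : dot3 n (cross n v) = 0 := by
  simp only [dot3, Fin.sum_univ_three, cross0, cross1, cross2]; ring

lemma dot3_cross_right (p w : R3) : dot3 (cross p w) p = 0 := by
  simp only [dot3, Fin.sum_univ_three, cross0, cross1, cross2]; ring

lemma dot3_cross_mid (p w : R3) : dot3 w (cross p w) = 0 := by
  simp only [dot3, Fin.sum_univ_three, cross0, cross1, cross2]; ring

lemma lagrange (p w : R3) :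
    dot3 (cross p w) (cross p w) = dot3 p p * dot3 w w - dot3 p w * dot3 p w := by
  simp only [dot3, Fin.sum_univ_three, cross0, cross1, cross2]; ring

-- the p-derivative of X_c equals the derivative of f_c := X(0,·)_c
lemma dP0_split (X : Phase0 → R3) (hX : ContDiff ℝ 1 X)
    (h2 : ∀ a b : Fin 3, ∀ γ, pb0 (fun γ => X γ a) (Pgen0 b) γ = kdelta a b)
    (c : Fin 3) (γ : Phase0) (k : Fin 3) :
    dP0 (fun γ => X γ c) γ k
      = fderiv ℝ (fun q : R3 => X (0, q) c) γ.2 (Pi.single k 1) := by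
  have hfc : Differentiable ℝ (fun q : R3 => X (0, q) c) := by
    have : Differentiable ℝ (fun q : R3 => ((0 : R3), q)) :=
      (differentiable_const _).prodMk differentiable_id
    exact (Xc_diff X hX c).comp this
  have heq : (fun γ : Phase0 => X γ c) = fun γ : Phase0 => γ.1 c + X (0, γ.2) c := by
    funext γ
    have := split X hX h2 γ.1 γ.2 c
    simpa using this
  have h1 : HasFDerivAt (fun γ : Phase0 => γ.1 c + X (0, γ.2) c)
      (xCLM c + (fderiv ℝ (fun q : R3 => X (0, q) c) γ.2).comp
        (ContinuousLinearMap.snd ℝ R3 R3)) γ := by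
    exact (hasF_x c γ).add ((hfc γ.2).hasFDerivAt.comp γ hasFDerivAt_snd)
  rw [dP0, heq, h1.fderiv]
  simp [xCLM_apply]

lemma dot3_kdelta2 (a b : Fin 3) (s t : ℝ) (w : R3) :
    dot3 (fun k => kdelta a k * s - kdelta b k * t) w = s * w a - t * w b := by
  simp only [dot3, sub_mul, Finset.sum_sub_distrib]
  congr 1 <;> simp [kdelta, ite_mul, mul_comm, mul_assoc]

lemma eval_expand (v : R3) (c : Fin 3) : v c = ∑ k, kdelta k c * v k := by
  simp [kdelta, ite_mul]

lemma Eid (X : Phase0 → R3) (hX : ContDiff ℝ 1 X)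
    (h2 : ∀ a b : Fin 3, ∀ γ, pb0 (fun γ => X γ a) (Pgen0 b) γ = kdelta a b)
    (h3 : ∀ a b c : Fin 3, ∀ γ, pb0 (Jgen0 a b) (fun γ => X γ c) γ
      = kdelta a c * X γ b - kdelta b c * X γ a)
    (a b c : Fin 3) (p : R3) :
    p b * fderiv ℝ (fun q : R3 => X (0, q) c) p (Pi.single a 1)
      - p a * fderiv ℝ (fun q : R3 => X (0, q) c) p (Pi.single b 1)
      = kdelta a c * X (0, p) b - kdelta b c * X (0, p) a := by
  have h := h3 a b c ((0, p) : Phase0)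
  rw [pb0] at h
  have hP : dP0 (Jgen0 a b) ((0, p) : Phase0) = 0 := by
    rw [dP0_J]
    funext k
    show (0:R3) a * kdelta b k - (0:R3) b * kdelta a k = 0
    show (0:ℝ) * kdelta b k - (0:ℝ) * kdelta a k = 0
    ring
  have hD : dP0 (fun γ => X γ c) ((0, p) : Phase0) =
      fun k => fderiv ℝ (fun q : R3 => X (0, q) c) p (Pi.single k 1) :=
    funext fun k => dP0_split X hX h2 c ((0, p) : Phase0) k
  rw [hP, dot3_zero_left, hD, dX0_J] at h
  have := dot3_kdelta2 a b (((0,p) : Phase0).2 b) (((0,p) : Phase0).2 a)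
      (fun k => fderiv ℝ (fun q : R3 => X (0, q) c) p (Pi.single k 1))
  rw [this] at h
  simpa using h

lemma Hident (X : Phase0 → R3) (hX : ContDiff ℝ 1 X)
    (h2 : ∀ a b : Fin 3, ∀ γ, pb0 (fun γ => X γ a) (Pgen0 b) γ = kdelta a b)
    (h3 : ∀ a b c : Fin 3, ∀ γ, pb0 (Jgen0 a b) (fun γ => X γ c) γ
      = kdelta a c * X γ b - kdelta b c * X γ a)
    (n q : R3) (c : Fin 3) :
    fderiv ℝ (fun r : R3 => X (0, r) c) q (cross n q) = cross n (X (0, q)) c := by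
  have E01 := Eid X hX h2 h3 0 1 c q
  have E02 := Eid X hX h2 h3 0 2 c q
  have E12 := Eid X hX h2 h3 1 2 c q
  rw [clm_sum (fderiv ℝ (fun r : R3 => X (0, r) c) q) (cross n q), Fin.sum_univ_three]
  rw [eval_expand (cross n (X (0, q))) c, Fin.sum_univ_three]
  simp only [cross0, cross1, cross2]
  linear_combination (-(n 2)) * E01 + n 1 * E02 + (-(n 0)) * E12

lemma f_diff (X : Phase0 → R3) (hX : ContDiff ℝ 1 X) (m : Fin 3) :
    Differentiable ℝ (fun q : R3 => X (0, q) m) :=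
  (Xc_diff X hX m).comp ((differentiable_const _).prodMk differentiable_id)

lemma rotkey (X : Phase0 → R3) (hX : ContDiff ℝ 1 X)
    (h2 : ∀ a b : Fin 3, ∀ γ, pb0 (fun γ => X γ a) (Pgen0 b) γ = kdelta a b)
    (h3 : ∀ a b c : Fin 3, ∀ γ, pb0 (Jgen0 a b) (fun γ => X γ c) γ
      = kdelta a c * X γ b - kdelta b c * X γ a)
    (h4 : ∀ x p : R3, X (x, -p) = X (x, p))
    (n p : R3) (hn : dot3 n n = 1) (hnp : dot3 n p = 0) (c : Fin 3) :
    X (0, p) c = dot3 n (X (0, p)) * n c := by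
  set γcur : ℝ → R3 := fun θ => Real.cos θ • p + Real.sin θ • cross n p with hγcur
  have hγ' : ∀ θ, HasDerivAt γcur (cross n (γcur θ)) θ := by
    intro θ
    have h := ((Real.hasDerivAt_cos θ).smul_const p).add
      ((Real.hasDerivAt_sin θ).smul_const (cross n p))
    refine h.congr_deriv ?_
    funext k
    rw [hγcur]
    simp only [cross_add_smul, cross_cross3, hn, hnp, Pi.add_apply, Pi.smul_apply,
      smul_eq_mul]
    ring
  have hFc : ∀ θ (m : Fin 3),
      HasDerivAt (fun θ => X (0, γcur θ) m) (cross n (X (0, γcur θ)) m) θ := by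
    intro θ m
    have h := ((f_diff X hX m (γcur θ)).hasFDerivAt).comp_hasDerivAt θ (hγ' θ)
    rwa [Hident X hX h2 h3 n (γcur θ) m] at h
  have hcross : ∀ θ (m : Fin 3),
      HasDerivAt (fun θ => cross n (X (0, γcur θ)) m)
        (cross n (cross n (X (0, γcur θ))) m) θ := by
    intro θ m
    have h := ((hFc θ (m + 2)).const_mul (n (m + 1))).sub
      ((hFc θ (m + 1)).const_mul (n (m + 2)))
    exact h
  have hdot : ∀ θ, HasDerivAt (fun θ => dot3 n (X (0, γcur θ))) 0 θ := by
    intro θ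
    have h := (((hFc θ 0).const_mul (n 0)).add ((hFc θ 1).const_mul (n 1))).add
      ((hFc θ 2).const_mul (n 2))
    have e0 : (fun θ => n 0 * X (0, γcur θ) 0 + n 1 * X (0, γcur θ) 1
        + n 2 * X (0, γcur θ) 2) = fun θ => dot3 n (X (0, γcur θ)) := by
      funext θ; simp [dot3, Fin.sum_univ_three]
    rw [← e0]
    have e1 : n 0 * cross n (X (0, γcur θ)) 0 + n 1 * cross n (X (0, γcur θ)) 1
        + n 2 * cross n (X (0, γcur θ)) 2 = 0 := by
      have := dot3_cross_self n (X (0, γcur θ))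
      simpa [dot3, Fin.sum_univ_three] using this
    rwa [e1] at h
  -- the rotated function g is constant
  have hg : ∀ θ, HasDerivAt (fun θ => Real.cos θ * X (0, γcur θ) c
      - Real.sin θ * cross n (X (0, γcur θ)) c
      + (1 - Real.cos θ) * (dot3 n (X (0, γcur θ)) * n c)) 0 θ := by
    intro θ
    have hA := (Real.hasDerivAt_cos θ).mul (hFc θ c)
    have hB := (Real.hasDerivAt_sin θ).mul (hcross θ c)
    have hC := ((hasDerivAt_const θ (1:ℝ)).sub (Real.hasDerivAt_cos θ)).mul
      ((hdot θ).mul_const (n c))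
    have h := (hA.sub hB).add hC
    refine h.congr_deriv ?_
    rw [cross_cross3, hn]
    ring
  have hdiff : Differentiable ℝ (fun θ => Real.cos θ * X (0, γcur θ) c
      - Real.sin θ * cross n (X (0, γcur θ)) c
      + (1 - Real.cos θ) * (dot3 n (X (0, γcur θ)) * n c)) :=
    fun θ => (hg θ).differentiableAt
  have hco := is_const_of_deriv_eq_zero hdiff (fun θ => (hg θ).deriv) Real.pi 0
  have hγ0 : γcur 0 = p := by
    funext k
    simp [hγcur]
  have hγpi : γcur Real.pi = -p := by
    funext k
    simp [hγcur]
  simp only [hγ0, hγpi, Real.cos_pi, Real.sin_pi, Real.cos_zero, Real.sin_zero,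
    h4 0 p] at hco
  -- hco : -1 * Xc - 0 * ... + (1 - -1) * (dot * n c) = 1 * Xc - 0 * ... + (1-1) * ...
  linarith [hco]

lemma dot3_comm (v w : R3) : dot3 v w = dot3 w v := by
  simp [dot3, mul_comm]

lemma dot3_smul_left (a : ℝ) (v w : R3) : dot3 (a • v) w = a * dot3 v w := by
  simp [dot3, Finset.mul_sum, mul_assoc]

lemma dot3_smul_right (a : ℝ) (v w : R3) : dot3 v (a • w) = a * dot3 v w := by
  simp [dot3, Finset.mul_sum, mul_left_comm]

lemma dot3_self_pos (v : R3) (i : Fin 3) (h : v i ≠ 0) : 0 < dot3 v v := by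
  have h1 : v i * v i ≤ ∑ k, v k * v k :=
    Finset.single_le_sum (fun k _ => mul_self_nonneg (v k)) (Finset.mem_univ i)
  have h2 : 0 < v i * v i := mul_self_pos.mpr h
  calc (0:ℝ) < v i * v i := h2
    _ ≤ ∑ k, v k * v k := h1
    _ = dot3 v v := rfl

lemma norm_one (w : R3) (hw : 0 < dot3 w w) :
    dot3 ((Real.sqrt (dot3 w w))⁻¹ • w) ((Real.sqrt (dot3 w w))⁻¹ • w) = 1 := by
  rw [dot3_smul_left, dot3_smul_right]
  have h1 : Real.sqrt (dot3 w w) ≠ 0 := (Real.sqrt_pos.mpr hw).ne'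
  have h2 : Real.sqrt (dot3 w w) * Real.sqrt (dot3 w w) = dot3 w w :=
    Real.mul_self_sqrt hw.le
  field_simp
  rw [Real.sq_sqrt hw.le]

lemma fzero0 (X : Phase0 → R3) (hX : ContDiff ℝ 1 X)
    (h2 : ∀ a b : Fin 3, ∀ γ, pb0 (fun γ => X γ a) (Pgen0 b) γ = kdelta a b)
    (h3 : ∀ a b c : Fin 3, ∀ γ, pb0 (Jgen0 a b) (fun γ => X γ c) γ
      = kdelta a c * X γ b - kdelta b c * X γ a)
    (b : Fin 3) : X (0, (0:R3)) b = 0 := by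
  have h := Eid X hX h2 h3 (b+1) b (b+1) 0
  have hk1 : kdelta (b+1) (b+1) = 1 := by simp [kdelta]
  have hk2 : kdelta b (b+1) = 0 := by
    have hne : ∀ j : Fin 3, j ≠ j + 1 := by decide
    simp [kdelta, hne b]
  simp only [Pi.zero_apply, zero_mul, sub_zero, hk1, hk2, one_mul] at h
  linarith [h]

lemma fvanish (X : Phase0 → R3) (hX : ContDiff ℝ 1 X)
    (h2 : ∀ a b : Fin 3, ∀ γ, pb0 (fun γ => X γ a) (Pgen0 b) γ = kdelta a b)
    (h3 : ∀ a b c : Fin 3, ∀ γ, pb0 (Jgen0 a b) (fun γ => X γ c) γ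
      = kdelta a c * X γ b - kdelta b c * X γ a)
    (h4 : ∀ x p : R3, X (x, -p) = X (x, p))
    (p : R3) (b : Fin 3) : X (0, p) b = 0 := by
  by_cases hp : p = 0
  · subst hp; exact fzero0 X hX h2 h3 b
  · obtain ⟨i, hi⟩ : ∃ i, p i ≠ 0 := by
      by_contra hcon
      push_neg at hcon
      exact hp (funext hcon)
    have hne : ∀ j : Fin 3, j ≠ j + 1 := by decide
    set u : R3 := Pi.single (i+1) 1 with hu
    set w : R3 := cross u p with hw
    have e1 : i+2+1 = i := by
      have h3' : (2:Fin 3)+1 = 0 := rfl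
      rw [add_assoc, h3', add_zero]
    have e2 : i+2+2 = i+1 := by
      have h4' : (2:Fin 3)+2 = 1 := rfl
      rw [add_assoc, h4']
    have hw2v : w (i+2) = -(p i) := by
      show u (i+2+1) * p (i+2+2) - u (i+2+2) * p (i+2+1) = -(p i)
      rw [e1, e2]
      rw [hu]
      rw [Pi.single_eq_same, Pi.single_eq_of_ne (hne i)]
      ring
    have hwp : dot3 w p = 0 := dot3_cross_left u p
    have hww : 0 < dot3 w w := dot3_self_pos w (i+2) (by rw [hw2v]; exact neg_ne_zero.mpr hi)
    have hpp : 0 < dot3 p p := dot3_self_pos p i hi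
    set w2 : R3 := cross p w with hw2def
    have hw2w2 : 0 < dot3 w2 w2 := by
      rw [hw2def, lagrange]
      have hc : dot3 p w = 0 := by rw [dot3_comm]; exact hwp
      rw [hc]
      nlinarith [mul_pos hpp hww]
    have hw2p : dot3 w2 p = 0 := dot3_cross_right p w
    have hww2 : dot3 w w2 = 0 := dot3_cross_mid p w
    set n1 : R3 := (Real.sqrt (dot3 w w))⁻¹ • w with hn1def
    set n2 : R3 := (Real.sqrt (dot3 w2 w2))⁻¹ • w2 with hn2def
    have hn1 : dot3 n1 n1 = 1 := norm_one w hww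
    have hn2 : dot3 n2 n2 = 1 := norm_one w2 hw2w2
    have hn1p : dot3 n1 p = 0 := by rw [hn1def, dot3_smul_left, hwp, mul_zero]
    have hn2p : dot3 n2 p = 0 := by rw [hn2def, dot3_smul_left, hw2p, mul_zero]
    have hn12 : dot3 n1 n2 = 0 := by
      rw [hn1def, hn2def, dot3_smul_left, dot3_smul_right, hww2]
      ring
    have A := rotkey X hX h2 h3 h4 n1 p hn1 hn1p
    have B := rotkey X hX h2 h3 h4 n2 p hn2 hn2p
    have hd1 : dot3 n1 (X (0,p)) = 0 := by
      have hx : dot3 n1 (X (0,p)) = dot3 n2 (X (0,p)) * dot3 n1 n2 := by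
        conv_lhs => rw [dot3]
        rw [Fin.sum_univ_three, B 0, B 1, B 2,
          show dot3 n1 n2 = n1 0 * n2 0 + n1 1 * n2 1 + n1 2 * n2 2 from by
            simp [dot3, Fin.sum_univ_three]]
        ring
      rw [hx, hn12, mul_zero]
    rw [A b, hd1, zero_mul]

theorem statement8 (X : Phase0 → R3) (hX : ContDiff ℝ 1 X)
    (h1 : ∀ a b : Fin 3, ∀ γ, pb0 (fun γ => X γ a) (fun γ => X γ b) γ = 0)
    (h2 : ∀ a b : Fin 3, ∀ γ, pb0 (fun γ => X γ a) (Pgen0 b) γ = kdelta a b)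
    (h3 : ∀ a b c : Fin 3, ∀ γ, pb0 (Jgen0 a b) (fun γ => X γ c) γ
      = kdelta a c * X γ b - kdelta b c * X γ a)
    (h4 : ∀ x p : R3, X (x, -p) = X (x, p)) :
    (∀ x p : R3, X (x, p) = x) ∧
    (ContDiff ℝ 1 (fun γ : Phase0 => γ.1) ∧
     (∀ a b : Fin 3, ∀ γ, pb0 (fun γ : Phase0 => γ.1 a) (fun γ => γ.1 b) γ = 0) ∧
     (∀ a b : Fin 3, ∀ γ, pb0 (fun γ : Phase0 => γ.1 a) (Pgen0 b) γ = kdelta a b) ∧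
     (∀ a b c : Fin 3, ∀ γ, pb0 (Jgen0 a b) (fun γ : Phase0 => γ.1 c) γ
        = kdelta a c * γ.1 b - kdelta b c * γ.1 a) ∧
     (∀ x p : R3, ((x, -p) : Phase0).1 = ((x, p) : Phase0).1)) := by
  refine ⟨?_, contDiff_fst, conv1, conv2, conv3, fun x p => rfl⟩
  intro x p
  funext a
  rw [split X hX h2 x p a, fvanish X hX h2 h3 h4 p a, add_zero]
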